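/- The local time exponent β : X → [0,∞] is upper semicontinuous (for every c the set {x : β(x) < c} is open), and β(x) ≥ 1 for every x ∈ X. -/

import Mathlib

/- STATEMENT 14: In the setting of r-step random walks on a compact connected metric
   measure space (X,d,μ) with more than one point and μ of full support, the local time
   exponent β(x) := inf_{R>0} β(B_R[x]) is upper semicontinuous (i.e. {x : β(x) < c} is
   open for every c) and β(x) ≥ 1 for every x. -/

open MeasureTheory Metric ProbabilityTheory Filter Topology
open scoped ENNReal

/-- Exit time from `B` of a discrete path: `τ_B(ω) = inf { k : ω k ∉ B }` (∞ if none). -/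
noncomputable def exitTime {X : Type*} (B : Set X) (ω : ℕ → X) : ℝ≥0∞ :=
  ⨅ (k : ℕ) (_ : ω k ∉ B), (k : ℝ≥0∞)

/-- `E_B(x) = 𝔼^x τ_B` for the walk with trajectory kernel `κ`. -/
noncomputable def meanExit {X : Type*} [MeasurableSpace X]
    (κ : Kernel X (ℕ → X)) (B : Set X) (x : X) : ℝ≥0∞ :=
  ∫⁻ ω, exitTime B ω ∂(κ x)

/-- `E⁺_B = sup_{y ∈ B} E_B(y)`. -/
noncomputable def maxExit {X : Type*} [MeasurableSpace X]
    (κ : Kernel X (ℕ → X)) (B : Set X) : ℝ≥0∞ :=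
  ⨆ y ∈ B, meanExit κ B y

/-- `T_γ(B) = limsup_{r→0⁺} E⁺_{r,B} · r^γ`. -/
noncomputable def Texp {X : Type*} [MeasurableSpace X]
    (P : ℝ → Kernel X (ℕ → X)) (B : Set X) (γ : ℝ) : ℝ≥0∞ :=
  Filter.limsup (fun r : ℝ => maxExit (P r) B * ENNReal.ofReal (r ^ γ)) (𝓝[>] (0 : ℝ))

/-- `β(B) = sup{ γ ≥ 0 : T_γ(B) = ∞ }` (an element of `[0,∞]`). -/
noncomputable def betaBall {X : Type*} [MeasurableSpace X]
    (P : ℝ → Kernel X (ℕ → X)) (B : Set X) : ℝ≥0∞ :=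
  ⨆ (γ : ℝ) (_ : 0 ≤ γ) (_ : Texp P B γ = ⊤), ENNReal.ofReal γ

/-- The local time exponent `β(x) = inf_{R > 0} β(B_R[x])`. -/
noncomputable def localBeta {X : Type*} [MetricSpace X] [MeasurableSpace X]
    (P : ℝ → Kernel X (ℕ → X)) (x : X) : ℝ≥0∞ :=
  ⨅ (R : ℝ) (_ : 0 < R), betaBall P (Metric.closedBall x R)

/- ---------- auxiliary lemmas ---------- -/

lemma exitTime_mono' {X : Type*} {B B' : Set X} (h : B ⊆ B') (ω : ℕ → X) :
    exitTime B ω ≤ exitTime B' ω := by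
  refine le_iInf₂ fun k hk => ?_
  exact iInf₂_le k (fun hB => hk (h hB))

lemma meanExit_mono' {X : Type*} [MeasurableSpace X] (κ : Kernel X (ℕ → X))
    {B B' : Set X} (h : B ⊆ B') (x : X) : meanExit κ B x ≤ meanExit κ B' x :=
  lintegral_mono fun ω => exitTime_mono' h ω

lemma maxExit_mono' {X : Type*} [MeasurableSpace X] (κ : Kernel X (ℕ → X))
    {B B' : Set X} (h : B ⊆ B') : maxExit κ B ≤ maxExit κ B' := by
  refine iSup₂_le fun y hy => le_iSup₂_of_le y (h hy) (meanExit_mono' κ h y)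

lemma Texp_mono' {X : Type*} [MeasurableSpace X] (P : ℝ → Kernel X (ℕ → X))
    {B B' : Set X} (h : B ⊆ B') (γ : ℝ) : Texp P B γ ≤ Texp P B' γ := by
  refine limsup_le_limsup (Eventually.of_forall fun r => ?_)
  exact mul_le_mul_left (maxExit_mono' (P r) h) _

lemma betaBall_mono' {X : Type*} [MeasurableSpace X] (P : ℝ → Kernel X (ℕ → X))
    {B B' : Set X} (h : B ⊆ B') : betaBall P B ≤ betaBall P B' := by
  refine iSup_le fun γ => iSup_le fun h0 => iSup_le fun hT => ?_
  have hT' : Texp P B' γ = ⊤ := top_le_iff.mp (hT ▸ Texp_mono' P h γ)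
  exact le_iSup_of_le γ (le_iSup_of_le h0 (le_iSup_of_le hT' le_rfl))

lemma prob_inter_one {Ω : Type*} [MeasurableSpace Ω] (ν : Measure Ω)
    [IsProbabilityMeasure ν] {A B : Set Ω} (hB : MeasurableSet B)
    (hA1 : ν A = 1) (hB1 : ν B = 1) : ν (A ∩ B) = 1 := by
  have h := measure_union_add_inter A hB (μ := ν)
  have hu : ν (A ∪ B) ≤ 1 := prob_le_one
  have hge : 1 ≤ ν (A ∩ B) := by
    have : ν (A ∪ B) + ν (A ∩ B) = 2 := by rw [h, hA1, hB1]; norm_num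
    by_contra hlt
    push_neg at hlt
    have : ν (A ∪ B) + ν (A ∩ B) < 1 + 1 :=
      ENNReal.add_lt_add_of_le_of_lt (by simp) hu hlt
    rw [h, hA1, hB1] at this
    exact absurd this (by simp)
  exact le_antisymm prob_le_one hge

lemma measurable_stay {X : Type*} [MetricSpace X] [MeasurableSpace X] [BorelSpace X]
    [SecondCountableTopology X] (r : ℝ) (n : ℕ) :
    MeasurableSet {ω : ℕ → X | ∀ k ≤ n, dist (ω k) (ω 0) ≤ k * r} := by
  have : {ω : ℕ → X | ∀ k ≤ n, dist (ω k) (ω 0) ≤ k * r}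
      = ⋂ k ∈ Set.Iic n, {ω : ℕ → X | dist (ω k) (ω 0) ≤ k * r} := by
    ext ω; simp [Set.mem_iInter]
  rw [this]
  exact MeasurableSet.biInter (Set.to_countable _) fun k _ =>
    measurableSet_le ((measurable_pi_apply k).dist (measurable_pi_apply 0)) measurable_const

section main

variable {X : Type*} [MetricSpace X] [CompactSpace X]
    [MeasurableSpace X] [BorelSpace X]
    (μ : Measure X) [μ.IsOpenPosMeasure] [IsFiniteMeasure μ]
    (P : ℝ → Kernel X (ℕ → X)) (hmk : ∀ r : ℝ, IsMarkovKernel (P r))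
    (hstart : ∀ (r : ℝ), 0 < r → ∀ x : X, P r x {ω | ω 0 = x} = 1)
    (hshift : ∀ (r : ℝ), 0 < r → ∀ (x : X) (S : Set (ℕ → X)), MeasurableSet S →
      P r x ((fun (ω : ℕ → X) (n : ℕ) => ω (n + 1)) ⁻¹' S) =
        (μ (Metric.ball x r))⁻¹ * ∫⁻ y in Metric.ball x r, P r y S ∂μ)

include hmk hstart hshift in
lemma stay_prob (r : ℝ) (hr : 0 < r) (n : ℕ) :
    ∀ x : X, P r x {ω | ∀ k ≤ n, dist (ω k) (ω 0) ≤ k * r} = 1 := by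
  haveI := hmk r
  induction n with
  | zero =>
    intro x
    have : {ω : ℕ → X | ∀ k ≤ 0, dist (ω k) (ω 0) ≤ k * r} = Set.univ := by
      ext ω
      simp only [Set.mem_setOf_eq, Set.mem_univ, iff_true]
      intro k hk
      interval_cases k
      simp
    rw [this]; exact measure_univ
  | succ n ih =>
    intro x
    set T : Set (ℕ → X) :=
      {ω | ∀ k ≤ n, dist (ω k) (ω 0) ≤ k * r} ∩ {ω | ω 0 ∈ Metric.ball x r} with hTdef
    have hTmeas : MeasurableSet T :=
      (measurable_stay r n).inter ((measurable_pi_apply 0) measurableSet_ball)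
    -- the shifted path lands in T almost surely
    have hT1 : ∀ y ∈ Metric.ball x r, P r y T = 1 := by
      intro y hy
      refine prob_inter_one _ ((measurable_pi_apply 0) measurableSet_ball) (ih y) ?_
      refine le_antisymm prob_le_one ?_
      calc (1 : ℝ≥0∞) = P r y {ω | ω 0 = y} := (hstart r hr y).symm
        _ ≤ P r y {ω | ω 0 ∈ Metric.ball x r} := by
            refine measure_mono fun ω hω => ?_
            simp only [Set.mem_setOf_eq] at hω ⊢
            rw [hω]; exact hy
    have hball_pos : μ (Metric.ball x r) ≠ 0 :=
      (measure_ball_pos μ x hr).ne'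
    have hball_fin : μ (Metric.ball x r) ≠ ⊤ := measure_ne_top μ _
    have hshift1 : P r x ((fun (ω : ℕ → X) (n : ℕ) => ω (n + 1)) ⁻¹' T) = 1 := by
      rw [hshift r hr x T hTmeas]
      have : ∫⁻ y in Metric.ball x r, P r y T ∂μ = μ (Metric.ball x r) := by
        rw [setLIntegral_congr_fun measurableSet_ball
          (fun y hy => hT1 y hy)]
        simp
      rw [this, ENNReal.inv_mul_cancel hball_pos hball_fin]
    have hsub : {ω : ℕ → X | ω 0 = x} ∩ ((fun (ω : ℕ → X) (n : ℕ) => ω (n + 1)) ⁻¹' T)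
        ⊆ {ω | ∀ k ≤ n + 1, dist (ω k) (ω 0) ≤ k * r} := by
      rintro ω ⟨h0, hT'⟩
      simp only [Set.mem_preimage, hTdef, Set.mem_inter_iff, Set.mem_setOf_eq] at hT'
      intro k hk
      match k with
      | 0 => simp
      | Nat.succ k =>
        have hk' : k ≤ n := Nat.succ_le_succ_iff.mp hk
        have h1 : dist (ω (k + 1)) (ω 1) ≤ k * r := hT'.1 k hk'
        have h2 : dist (ω 1) (ω 0) ≤ r := by
          have := hT'.2
          simp only [Set.mem_setOf_eq] at h0
          rw [Metric.mem_ball, ← h0] at this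
          exact le_of_lt this
        calc dist (ω (k + 1)) (ω 0) ≤ dist (ω (k + 1)) (ω 1) + dist (ω 1) (ω 0) :=
              dist_triangle _ _ _
          _ ≤ k * r + r := add_le_add h1 h2
          _ = (k + 1 : ℕ) * r := by push_cast; ring
    have hm2 : MeasurableSet ((fun (ω : ℕ → X) (n : ℕ) => ω (n + 1)) ⁻¹' T) := by
      refine hTmeas.preimage ?_
      exact measurable_pi_lambda _ fun n => measurable_pi_apply (n + 1)
    have h1 : P r x ({ω : ℕ → X | ω 0 = x} ∩
        ((fun (ω : ℕ → X) (n : ℕ) => ω (n + 1)) ⁻¹' T)) = 1 :=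
      prob_inter_one _ hm2 (hstart r hr x) hshift1
    refine le_antisymm prob_le_one ?_
    calc (1 : ℝ≥0∞) = _ := h1.symm
      _ ≤ _ := measure_mono hsub

include hmk hstart hshift in
lemma meanExit_lower (x : X) (R : ℝ) (hR : 0 < R) (r : ℝ) (hr : 0 < r) :
    ENNReal.ofReal (R / r) ≤ meanExit (P r) (Metric.closedBall x R) x := by
  haveI := hmk r
  set n : ℕ := ⌊R / r⌋₊ with hn
  set S : Set (ℕ → X) :=
    {ω | ∀ k ≤ n, dist (ω k) (ω 0) ≤ k * r} ∩ {ω | ω 0 = x} with hSdef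
  have hSm1 : MeasurableSet {ω : ℕ → X | ω 0 = x} :=
 by
    have h : {ω : ℕ → X | ω 0 = x} = (fun ω : ℕ → X => ω 0) ⁻¹' {x} := rfl
    rw [h]
    exact (measurable_pi_apply 0) (measurableSet_singleton x)
  have hSmeas : MeasurableSet S := (measurable_stay r n).inter hSm1
  have hS1 : P r x S = 1 :=
    prob_inter_one _ hSm1 (stay_prob μ P hmk hstart hshift r hr n x) (hstart r hr x)
  have hexit : ∀ ω ∈ S, ((n : ℝ≥0∞) + 1) ≤ exitTime (Metric.closedBall x R) ω := by
    rintro ω ⟨hstay, h0⟩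
    simp only [Set.mem_setOf_eq] at hstay h0
    refine le_iInf₂ fun k hk => ?_
    have hkn : ¬ k ≤ n := by
      intro hkn
      apply hk
      rw [Metric.mem_closedBall, ← h0]
      calc dist (ω k) (ω 0) ≤ k * r := hstay k hkn
        _ ≤ n * r := by
            have : (k : ℝ) ≤ n := Nat.cast_le.mpr hkn
            nlinarith
        _ ≤ R := by
            have h1 : (n : ℝ) ≤ R / r := Nat.floor_le (by positivity)
            calc (n : ℝ) * r ≤ (R / r) * r := by nlinarith
              _ = R := div_mul_cancel₀ R hr.ne'
    have : n + 1 ≤ k := Nat.succ_le_of_lt (Nat.lt_of_not_le hkn)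
    calc ((n : ℝ≥0∞) + 1) = ((n + 1 : ℕ) : ℝ≥0∞) := by push_cast; ring
      _ ≤ (k : ℝ≥0∞) := Nat.cast_le.mpr this
  have hlow : ENNReal.ofReal (R / r) ≤ (n : ℝ≥0∞) + 1 := by
    have h1 : R / r < n + 1 := Nat.lt_floor_add_one (R / r)
    calc ENNReal.ofReal (R / r) ≤ ENNReal.ofReal ((n : ℝ) + 1) :=
          ENNReal.ofReal_le_ofReal h1.le
      _ = (n : ℝ≥0∞) + 1 := by
          rw [show ((n : ℝ) + 1) = ((n + 1 : ℕ) : ℝ) by push_cast; ring,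
            ENNReal.ofReal_natCast]
          push_cast; ring
  refine hlow.trans ?_
  calc (n : ℝ≥0∞) + 1 = ((n : ℝ≥0∞) + 1) * P r x S := by rw [hS1, mul_one]
    _ = ∫⁻ ω, S.indicator (fun _ => (n : ℝ≥0∞) + 1) ω ∂(P r x) := by
        rw [lintegral_indicator hSmeas]; simp
    _ ≤ ∫⁻ ω, exitTime (Metric.closedBall x R) ω ∂(P r x) := by
        refine lintegral_mono fun ω => ?_
        by_cases hω : ω ∈ S
        · rw [Set.indicator_of_mem hω]; exact hexit ω hω
        · rw [Set.indicator_of_notMem hω]; exact zero_le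
    _ = meanExit (P r) (Metric.closedBall x R) x := rfl

include hmk hstart hshift in
lemma Texp_top (x : X) (R : ℝ) (hR : 0 < R) (γ : ℝ) (hγ0 : 0 ≤ γ) (hγ1 : γ < 1) :
    Texp P (Metric.closedBall x R) γ = ⊤ := by
  set g : ℝ → ℝ≥0∞ := fun r => ENNReal.ofReal (R * r ^ (γ - 1)) with hg
  have hgtop : Tendsto g (𝓝[>] (0 : ℝ)) (𝓝 ⊤) := by
    have h1 : Tendsto (fun r : ℝ => R * r ^ (γ - 1)) (𝓝[>] (0 : ℝ)) atTop := by
      have h2 : Tendsto (fun r : ℝ => (r⁻¹) ^ (1 - γ)) (𝓝[>] (0 : ℝ)) atTop :=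
        (tendsto_rpow_atTop (by linarith)).comp tendsto_inv_nhdsGT_zero
      have h3 : Tendsto (fun r : ℝ => r ^ (γ - 1)) (𝓝[>] (0 : ℝ)) atTop := by
        refine h2.congr' ?_
        filter_upwards [self_mem_nhdsWithin] with r hr
        have hr' : (0 : ℝ) < r := hr
        rw [← Real.rpow_neg_one r, ← Real.rpow_mul hr'.le]
        congr 1
        ring
      exact h3.const_mul_atTop hR
    exact ENNReal.tendsto_ofReal_atTop.comp h1
  have hbound : ∀ᶠ r in 𝓝[>] (0 : ℝ),
      g r ≤ maxExit (P r) (Metric.closedBall x R) * ENNReal.ofReal (r ^ γ) := by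
    filter_upwards [self_mem_nhdsWithin] with r hr
    have hr' : (0 : ℝ) < r := hr
    have hme : ENNReal.ofReal (R / r) ≤ maxExit (P r) (Metric.closedBall x R) := by
      refine le_trans (meanExit_lower μ P hmk hstart hshift x R hR r hr') ?_
      exact le_iSup₂_of_le x (Metric.mem_closedBall_self hR.le) le_rfl
    calc g r = ENNReal.ofReal ((R / r) * r ^ γ) := by
          show ENNReal.ofReal (R * r ^ (γ - 1)) = _
          congr 1
          rw [Real.rpow_sub hr', Real.rpow_one]
          field_simp
      _ = ENNReal.ofReal (R / r) * ENNReal.ofReal (r ^ γ) := by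
          rw [ENNReal.ofReal_mul (by positivity)]
      _ ≤ maxExit (P r) (Metric.closedBall x R) * ENNReal.ofReal (r ^ γ) :=
          mul_le_mul_left hme _
  have hglim : limsup g (𝓝[>] (0 : ℝ)) = ⊤ := hgtop.limsup_eq
  refine top_le_iff.mp ?_
  calc (⊤ : ℝ≥0∞) = limsup g (𝓝[>] (0 : ℝ)) := hglim.symm
    _ ≤ Texp P (Metric.closedBall x R) γ := limsup_le_limsup hbound

include hmk hstart hshift in
lemma one_le_betaBall (x : X) (R : ℝ) (hR : 0 < R) :
    1 ≤ betaBall P (Metric.closedBall x R) := by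
  refine le_of_forall_lt fun c hc => ?_
  have hc' : c ≠ ⊤ := hc.ne_top
  set γ : ℝ := (c.toReal + 1) / 2 with hγ
  have hct : c.toReal < 1 := by
    rw [← ENNReal.toReal_one]
    exact ENNReal.toReal_strict_mono ENNReal.one_ne_top hc
  have hγ0 : 0 ≤ γ := by positivity
  have hγ1 : γ < 1 := by rw [hγ]; linarith
  have hγc : c.toReal < γ := by rw [hγ]; linarith [ENNReal.toReal_nonneg (a := c)]
  have hT : Texp P (Metric.closedBall x R) γ = ⊤ :=
    Texp_top μ P hmk hstart hshift x R hR γ hγ0 hγ1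
  have hle : ENNReal.ofReal γ ≤ betaBall P (Metric.closedBall x R) :=
    le_iSup_of_le γ (le_iSup_of_le hγ0 (le_iSup_of_le hT le_rfl))
  refine lt_of_lt_of_le ?_ hle
  rw [← ENNReal.ofReal_toReal hc']
  exact ENNReal.ofReal_lt_ofReal_iff (lt_of_le_of_lt ENNReal.toReal_nonneg hγc) |>.mpr hγc

end main

theorem statement14 {X : Type*} [MetricSpace X] [CompactSpace X] [ConnectedSpace X]
    [Nontrivial X] [MeasurableSpace X] [BorelSpace X]
    (μ : Measure X) [μ.IsOpenPosMeasure] [IsFiniteMeasure μ]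
    (P : ℝ → Kernel X (ℕ → X)) (hmk : ∀ r : ℝ, IsMarkovKernel (P r))
    (hstart : ∀ (r : ℝ), 0 < r → ∀ x : X, P r x {ω | ω 0 = x} = 1)
    (hshift : ∀ (r : ℝ), 0 < r → ∀ (x : X) (S : Set (ℕ → X)), MeasurableSet S →
      P r x ((fun (ω : ℕ → X) (n : ℕ) => ω (n + 1)) ⁻¹' S) =
        (μ (Metric.ball x r))⁻¹ * ∫⁻ y in Metric.ball x r, P r y S ∂μ) :
    (∀ c : ℝ≥0∞, IsOpen {x : X | localBeta P x < c}) ∧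
    (∀ x : X, 1 ≤ localBeta P x) := by
  constructor
  · intro c
    rw [Metric.isOpen_iff]
    intro x hx
    simp only [Set.mem_setOf_eq, localBeta] at hx
    obtain ⟨R, hR, hRc⟩ : ∃ R : ℝ, 0 < R ∧ betaBall P (Metric.closedBall x R) < c := by
      by_contra h
      push_neg at h
      have : c ≤ ⨅ (R : ℝ) (_ : 0 < R), betaBall P (Metric.closedBall x R) :=
        le_iInf₂ fun R hR => h R hR
      exact absurd hx (not_lt.mpr this)
    refine ⟨R / 2, by positivity, fun y hy => ?_⟩
    simp only [Set.mem_setOf_eq, localBeta]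
    have hsub : Metric.closedBall y (R / 2) ⊆ Metric.closedBall x R := by
      intro z hz
      rw [Metric.mem_closedBall] at *
      have hxy : dist y x < R / 2 := hy
      calc dist z x ≤ dist z y + dist y x := dist_triangle _ _ _
        _ ≤ R / 2 + R / 2 := add_le_add hz hxy.le
        _ = R := by ring
    calc (⨅ (R' : ℝ) (_ : 0 < R'), betaBall P (Metric.closedBall y R'))
        ≤ betaBall P (Metric.closedBall y (R / 2)) := iInf₂_le (R / 2) (by positivity)
      _ ≤ betaBall P (Metric.closedBall x R) := betaBall_mono' P hsub
      _ < c := hRc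
  · intro x
    refine le_iInf₂ fun R hR => one_le_betaBall μ P hmk hstart hshift x R hR
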